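/- Let d ≥ 1 and define p : ℝ^d × (0,∞) → ℝ by p(x₁,...,x_d,t) = 2 ∫₀^∞ (exp(−w²/(2t))/√(2πt)) · ∏_{k=1}^{d} (exp(−x_k²/(2w))/√(2πw)) dw. Then for every (x₁,...,x_d) ≠ 0 and t > 0, p satisfies ∂p/∂t = (1/8) (∑_{j=1}^{d} ∂²/∂x_j²)² p. -/

import Mathlib

open Real MeasureTheory Filter Set

/-- Laplacian of a function on `ℝ^d`, as the sum of second coordinatewise derivatives. -/
noncomputable def laplacian {d : ℕ} (f : (Fin d → ℝ) → ℝ) (x : Fin d → ℝ) : ℝ :=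
  ∑ j : Fin d, iteratedDeriv 2 (fun h => f (Function.update x j h)) (x j)

/-- Joint density of the vector process `(B₁(|B(t)|), ..., B_d(|B(t)|))`. -/
noncomputable def iterBMDensityVec (d : ℕ) (x : Fin d → ℝ) (t : ℝ) : ℝ :=
  2 * ∫ w in Set.Ioi (0 : ℝ),
    (Real.exp (-w ^ 2 / (2 * t)) / Real.sqrt (2 * π * t)) *
      ∏ k : Fin d, Real.exp (-(x k) ^ 2 / (2 * w)) / Real.sqrt (2 * π * w)

namespace IterBMAux

/-- basic integral -/
noncomputable def bint (s t a : ℝ) : ℝ :=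
  ∫ w in Set.Ioi (0:ℝ), w ^ a * Real.exp (-s / (2*w)) * Real.exp (-w^2 / (2*t))

lemma rpow_exp_le {s w : ℝ} (hs : 0 < s) (hw : 0 < w) (k : ℕ) (hk : k ≠ 0) :
    Real.exp (-s/(2*w)) ≤ (2*k*w/s)^k := by
  have hk' : (0:ℝ) < k := by positivity
  have hu : 0 < s/(2*w) := by positivity
  have h1 : s/(2*w)/k ≤ Real.exp (s/(2*w)/k) := by
    have := Real.add_one_le_exp (s/(2*w)/k)
    nlinarith [this, hu, hk']
  have h2 : (s/(2*w)/k)^k ≤ Real.exp (s/(2*w)) := by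
    calc (s/(2*w)/k)^k ≤ (Real.exp (s/(2*w)/k))^k := by
          exact pow_le_pow_left₀ (by positivity) h1 k
      _ = Real.exp (s/(2*w)/k * k) := by
          rw [← Real.exp_nat_mul]; ring_nf
      _ = Real.exp (s/(2*w)) := by
          congr 1; field_simp
  have hpos : (0:ℝ) < (s/(2*w)/k)^k := by positivity
  have : Real.exp (-s/(2*w)) = (Real.exp (s/(2*w)))⁻¹ := by
    rw [← Real.exp_neg]; congr 1; ring
  rw [this]
  have h3 : (Real.exp (s/(2*w)))⁻¹ ≤ ((s/(2*w)/k)^k)⁻¹ := by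
    exact inv_anti₀ hpos h2
  refine h3.trans_eq ?_
  rw [← inv_pow]
  congr 1
  field_simp

lemma contOn_basic (s t a : ℝ) :
    ContinuousOn (fun w : ℝ => w ^ a * Real.exp (-s/(2*w)) * Real.exp (-w^2/(2*t)))
      (Set.Ioi 0) := by
  intro w hw
  have hw0 : (w:ℝ) ≠ 0 := ne_of_gt hw
  have c1 : ContinuousAt (fun w : ℝ => w ^ a) w :=
    Real.continuousAt_rpow_const w a (Or.inl hw0)
  have c2 : ContinuousAt (fun w : ℝ => Real.exp (-s/(2*w))) w := by
    apply Real.continuous_exp.continuousAt.comp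
    exact (continuousAt_const.div (by fun_prop) (by simpa using hw0))
  have c3 : ContinuousAt (fun w : ℝ => Real.exp (-w^2/(2*t))) w := by fun_prop
  exact ((c1.mul c2).mul c3).continuousWithinAt

lemma aesm_basic (s t a : ℝ) :
    AEStronglyMeasurable (fun w : ℝ => w ^ a * Real.exp (-s/(2*w)) * Real.exp (-w^2/(2*t)))
      (volume.restrict (Set.Ioi 0)) :=
  (contOn_basic s t a).aestronglyMeasurable measurableSet_Ioi

lemma integrable_basic {s t : ℝ} (hs : 0 < s) (ht : 0 < t) (a : ℝ) :
    IntegrableOn (fun w : ℝ => w ^ a * Real.exp (-s/(2*w)) * Real.exp (-w^2/(2*t)))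
      (Set.Ioi 0) := by
  obtain ⟨k, hk1, hk2⟩ : ∃ k : ℕ, -a ≤ k ∧ k ≠ 0 := by
    refine ⟨⌈-a⌉₊ + 1, ?_, by omega⟩
    calc -a ≤ ⌈-a⌉₊ := Nat.le_ceil _
      _ ≤ (⌈-a⌉₊ + 1 : ℕ) := by exact_mod_cast Nat.le_succ _
  have base : IntegrableOn (fun w : ℝ => w ^ (a + k) * Real.exp (-(1/(2*t)) * w^2))
      (Set.Ioi 0) :=
    integrableOn_rpow_mul_exp_neg_mul_sq (by positivity) (by linarith)
  refine Integrable.mono' (base.const_mul ((2*k/s)^k)) (aesm_basic s t a) ?_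
  filter_upwards [ae_restrict_mem measurableSet_Ioi] with w hw
  have hw : (0:ℝ) < w := hw
  have hFG : ‖w ^ a * Real.exp (-s/(2*w)) * Real.exp (-w^2/(2*t))‖
      = w ^ a * Real.exp (-s/(2*w)) * Real.exp (-w^2/(2*t)) := by
    rw [Real.norm_eq_abs, abs_of_nonneg]; positivity
  rw [hFG]
  have h1 : Real.exp (-s/(2*w)) ≤ (2*k/s)^k * w ^ (k:ℕ) := by
    have := rpow_exp_le hs hw k hk2
    calc Real.exp (-s/(2*w)) ≤ (2*k*w/s)^k := this
      _ = (2*k/s)^k * w ^ (k:ℕ) := by rw [← mul_pow]; congr 1; ring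
  have h2 : w ^ a * Real.exp (-s/(2*w)) ≤ (2*k/s)^k * w ^ (a + k) := by
    calc w ^ a * Real.exp (-s/(2*w)) ≤ w ^ a * ((2*k/s)^k * w ^ (k:ℕ)) := by
          exact mul_le_mul_of_nonneg_left h1 (by positivity)
      _ = (2*k/s)^k * w ^ (a + k) := by
          rw [Real.rpow_add hw, Real.rpow_natCast]; ring
  have h3 : Real.exp (-w^2/(2*t)) = Real.exp (-(1/(2*t)) * w^2) := by congr 1; ring
  calc w ^ a * Real.exp (-s/(2*w)) * Real.exp (-w^2/(2*t))
      ≤ (2*k/s)^k * w ^ (a + k) * Real.exp (-w^2/(2*t)) := by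
        exact mul_le_mul_of_nonneg_right h2 (by positivity)
    _ = (2*k/s)^k * (w ^ (a + k) * Real.exp (-(1/(2*t)) * w^2)) := by rw [h3]; ring

lemma tendsto_rpow_exp_zero {s : ℝ} (hs : 0 < s) (b : ℝ) :
    Tendsto (fun w : ℝ => w ^ b * Real.exp (-s/(2*w))) (nhdsWithin 0 (Set.Ioi 0)) (nhds 0) := by
  have h := (tendsto_rpow_mul_exp_neg_mul_atTop_nhds_zero (-b) (s/2) (by positivity)).comp
    tendsto_inv_nhdsGT_zero
  refine h.congr' ?_
  filter_upwards [self_mem_nhdsWithin] with w hw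
  have hw : (0:ℝ) < w := hw
  simp only [Function.comp]
  rw [Real.inv_rpow hw.le, ← Real.rpow_neg hw.le, neg_neg]
  congr 2
  field_simp


lemma hasDerivAt_bint_s {s t : ℝ} (hs : 0 < s) (ht : 0 < t) (a : ℝ) :
    HasDerivAt (fun u => bint u t a) (-(1/2) * bint s t (a-1)) s := by
  have key := hasDerivAt_integral_of_dominated_loc_of_deriv_le
    (μ := volume.restrict (Set.Ioi (0:ℝ))) (x₀ := s) (s := Metric.ball s (s/2))
    (F := fun u w => w ^ a * Real.exp (-u/(2*w)) * Real.exp (-w^2/(2*t)))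
    (F' := fun u w => -(2*w)⁻¹ * (w ^ a * Real.exp (-u/(2*w)) * Real.exp (-w^2/(2*t))))
    (bound := fun w => (2*w)⁻¹ * (w ^ a * Real.exp (-(s/2)/(2*w)) * Real.exp (-w^2/(2*t))))
    (Metric.ball_mem_nhds _ (by positivity))
    (Filter.Eventually.of_forall fun u => aesm_basic u t a)
    (integrable_basic hs ht a)
    (by
      have c : ContinuousOn (fun w : ℝ => -(2*w)⁻¹) (Set.Ioi 0) := by
        intro w hw
        have hw : (0:ℝ) < w := hw
        exact (((continuousAt_inv₀ (by positivity : (2*w) ≠ 0)).comp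
          (by fun_prop : ContinuousAt (fun w : ℝ => 2*w) w)).neg).continuousWithinAt
      exact (c.mul (contOn_basic s t a)).aestronglyMeasurable measurableSet_Ioi)
    ?_ ?_ ?_
  · have heq : (∫ w in Set.Ioi (0:ℝ),
        -(2*w)⁻¹ * (w ^ a * Real.exp (-s/(2*w)) * Real.exp (-w^2/(2*t))))
        = -(1/2) * bint s t (a-1) := by
      rw [show -(1/2) * bint s t (a-1)
          = ∫ w in Set.Ioi (0:ℝ),
            -(1/2) * (w ^ (a-1) * Real.exp (-s/(2*w)) * Real.exp (-w^2/(2*t))) from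
        (MeasureTheory.integral_const_mul _ _).symm]
      apply setIntegral_congr_fun measurableSet_Ioi
      intro w hw
      have hw : (0:ℝ) < w := hw
      dsimp only
      rw [Real.rpow_sub hw, Real.rpow_one]
      field_simp
    rw [← heq]
    exact key.2
  · -- bound
    filter_upwards [ae_restrict_mem measurableSet_Ioi] with w hw
    intro u hu
    have hw : (0:ℝ) < w := hw
    have hu2 : s/2 ≤ u := by
      have := abs_lt.1 (by simpa [Metric.mem_ball, Real.dist_eq] using hu)
      linarith [this.1]
    have hE : Real.exp (-u/(2*w)) ≤ Real.exp (-(s/2)/(2*w)) := by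
      apply Real.exp_le_exp.2
      rw [div_le_div_iff₀ (by positivity) (by positivity)]
      nlinarith
    rw [norm_mul, norm_neg, norm_inv]
    have h1 : ‖w ^ a * Real.exp (-u/(2*w)) * Real.exp (-w^2/(2*t))‖
        ≤ w ^ a * Real.exp (-(s/2)/(2*w)) * Real.exp (-w^2/(2*t)) := by
      rw [Real.norm_eq_abs, abs_of_nonneg (by positivity)]
      have := mul_le_mul_of_nonneg_left hE (a := w ^ a) (by positivity)
      nlinarith [Real.exp_pos (-w^2/(2*t)), Real.rpow_pos_of_pos hw a, Real.exp_pos (-(s/2)/(2*w)), Real.exp_pos (-u/(2*w))]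
    calc ‖(2*w)‖⁻¹ * ‖w ^ a * Real.exp (-u/(2*w)) * Real.exp (-w^2/(2*t))‖
        ≤ ‖(2*w)‖⁻¹ * (w ^ a * Real.exp (-(s/2)/(2*w)) * Real.exp (-w^2/(2*t))) := by
          exact mul_le_mul_of_nonneg_left h1 (by positivity)
      _ = (2*w)⁻¹ * (w ^ a * Real.exp (-(s/2)/(2*w)) * Real.exp (-w^2/(2*t))) := by
          rw [Real.norm_eq_abs, abs_of_pos (by positivity)]
  · -- bound integrable
    have : IntegrableOn (fun w : ℝ =>
        (1/2) * (w ^ (a-1) * Real.exp (-(s/2)/(2*w)) * Real.exp (-w^2/(2*t))))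
        (Set.Ioi 0) := (integrable_basic (by positivity) ht (a-1)).const_mul _
    refine this.congr_fun ?_ measurableSet_Ioi
    intro w hw
    have hw : (0:ℝ) < w := hw
    dsimp only
    rw [Real.rpow_sub hw, Real.rpow_one]
    field_simp
  · -- differentiability
    filter_upwards [ae_restrict_mem measurableSet_Ioi] with w hw
    intro u hu
    have hw : (0:ℝ) < w := hw
    have hlin : HasDerivAt (fun u : ℝ => -u/(2*w)) (-(2*w)⁻¹) u := by
      have := ((hasDerivAt_id u).div_const (2*w)).neg
      simpa [neg_div, one_div, Pi.neg_def] using this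
    have := ((hlin.exp.const_mul (w ^ a)).mul_const (Real.exp (-w^2/(2*t))))
    convert (config := {preTransparency := .instances, postTransparency := .default}) this using 1
    ring


lemma rp_m1 {w : ℝ} (hw : 0 < w) (a : ℝ) : w ^ (a - 1) = w ^ a / w := by
  rw [Real.rpow_sub hw, Real.rpow_one]

lemma rp_m2 {w : ℝ} (hw : 0 < w) (a : ℝ) : w ^ (a - 2) = w ^ a / w ^ 2 := by
  rw [Real.rpow_sub hw, show (2:ℝ) = ((2:ℕ):ℝ) by norm_num, Real.rpow_natCast]

lemma rp_m3 {w : ℝ} (hw : 0 < w) (a : ℝ) : w ^ (a - 3) = w ^ a / w ^ 3 := by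
  rw [Real.rpow_sub hw, show (3:ℝ) = ((3:ℕ):ℝ) by norm_num, Real.rpow_natCast]

lemma rp_m4 {w : ℝ} (hw : 0 < w) (a : ℝ) : w ^ (a - 4) = w ^ a / w ^ 4 := by
  rw [Real.rpow_sub hw, show (4:ℝ) = ((4:ℕ):ℝ) by norm_num, Real.rpow_natCast]

lemma rp_p2 {w : ℝ} (hw : 0 < w) (a : ℝ) : w ^ (a + 2) = w ^ a * w ^ 2 := by
  rw [Real.rpow_add hw, show (2:ℝ) = ((2:ℕ):ℝ) by norm_num, Real.rpow_natCast]

lemma hasDerivAt_bint_t {s t : ℝ} (hs : 0 < s) (ht : 0 < t) (a : ℝ) :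
    HasDerivAt (fun τ => bint s τ a) (1/(2*t^2) * bint s t (a+2)) t := by
  have key := hasDerivAt_integral_of_dominated_loc_of_deriv_le
    (μ := volume.restrict (Set.Ioi (0:ℝ))) (x₀ := t) (s := Metric.ball t (t/2))
    (F := fun τ w => w ^ a * Real.exp (-s/(2*w)) * Real.exp (-w^2/(2*τ)))
    (F' := fun τ w => w^2/(2*τ^2) * (w ^ a * Real.exp (-s/(2*w)) * Real.exp (-w^2/(2*τ))))
    (bound := fun w => 2/t^2 * (w ^ (a+2) * Real.exp (-s/(2*w)) * Real.exp (-w^2/(3*t))))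
    (Metric.ball_mem_nhds _ (by positivity))
    (Filter.Eventually.of_forall fun τ => aesm_basic s τ a)
    (integrable_basic hs ht a)
    (by
      have c : ContinuousOn (fun w : ℝ => w^2/(2*t^2)) (Set.Ioi 0) := by fun_prop
      exact (c.mul (contOn_basic s t a)).aestronglyMeasurable measurableSet_Ioi)
    ?_ ?_ ?_
  · have heq : (∫ w in Set.Ioi (0:ℝ),
        w^2/(2*t^2) * (w ^ a * Real.exp (-s/(2*w)) * Real.exp (-w^2/(2*t))))
        = 1/(2*t^2) * bint s t (a+2) := by
      rw [show 1/(2*t^2) * bint s t (a+2)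
          = ∫ w in Set.Ioi (0:ℝ),
            1/(2*t^2) * (w ^ (a+2) * Real.exp (-s/(2*w)) * Real.exp (-w^2/(2*t))) from
        (MeasureTheory.integral_const_mul _ _).symm]
      apply setIntegral_congr_fun measurableSet_Ioi
      intro w hw
      have hw : (0:ℝ) < w := hw
      dsimp only
      rw [rp_p2 hw]
      field_simp
    rw [← heq]
    exact key.2
  · -- bound
    filter_upwards [ae_restrict_mem measurableSet_Ioi] with w hw
    intro τ hτ
    have hw : (0:ℝ) < w := hw
    have hτ' := abs_lt.1 (by simpa [Metric.mem_ball, Real.dist_eq] using hτ)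
    have hτ1 : t/2 < τ := by linarith [hτ'.1]
    have hτ2 : τ < 3*t/2 := by linarith [hτ'.2]
    have hτ0 : 0 < τ := by linarith
    have hE : Real.exp (-w^2/(2*τ)) ≤ Real.exp (-w^2/(3*t)) := by
      apply Real.exp_le_exp.2
      rw [div_le_div_iff₀ (by positivity) (by positivity)]
      nlinarith [sq_nonneg w]
    have hc : w^2/(2*τ^2) ≤ 2/t^2 * w^2 := by
      rw [div_le_iff₀ (by positivity)]
      have h4 : t^2 < 4*τ^2 := by nlinarith
      have h2 : t^2 * w^2 ≤ 4*τ^2 * w^2 := by nlinarith [sq_nonneg w, h4]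
      have e : 2/t^2 * w^2 * (2*τ^2) = 4*τ^2*w^2/t^2 := by ring
      rw [e, le_div_iff₀ (by positivity)]
      nlinarith
    rw [Real.norm_eq_abs, abs_of_nonneg (by positivity)]
    calc w^2/(2*τ^2) * (w ^ a * Real.exp (-s/(2*w)) * Real.exp (-w^2/(2*τ)))
        ≤ 2/t^2 * w^2 * (w ^ a * Real.exp (-s/(2*w)) * Real.exp (-w^2/(3*t))) := by
          apply mul_le_mul hc ?_ (by positivity) (by positivity)
          exact mul_le_mul_of_nonneg_left hE (by positivity)
      _ = 2/t^2 * (w ^ (a+2) * Real.exp (-s/(2*w)) * Real.exp (-w^2/(3*t))) := by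
          rw [rp_p2 hw]; ring
  · -- bound integrable
    have : IntegrableOn (fun w : ℝ =>
        2/t^2 * (w ^ (a+2) * Real.exp (-s/(2*w)) * Real.exp (-w^2/(2*(3*t/2)))))
        (Set.Ioi 0) := (integrable_basic hs (by positivity) (a+2)).const_mul _
    refine this.congr_fun ?_ measurableSet_Ioi
    intro w hw
    dsimp only
    norm_num
    exact Or.inl (Or.inl (by ring))
  · -- differentiability
    filter_upwards [ae_restrict_mem measurableSet_Ioi] with w hw
    intro τ hτ
    have hw : (0:ℝ) < w := hw
    have hτ' := abs_lt.1 (by simpa [Metric.mem_ball, Real.dist_eq] using hτ)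
    have hτ0 : 0 < τ := by linarith [hτ'.1]
    have hlin : HasDerivAt (fun τ : ℝ => -w^2/(2*τ)) (w^2/(2*τ^2)) τ := by
      have h0 := (hasDerivAt_inv hτ0.ne').const_mul (-w^2/2)
      have e1 : (fun y : ℝ => -w^2/2 * y⁻¹) = fun y : ℝ => -w^2/(2*y) := by
        funext v; rw [← div_eq_mul_inv, div_div]
      rw [e1] at h0
      convert (config := {preTransparency := .instances, postTransparency := .default}) h0 using 1
      field_simp
    have := hlin.exp.const_mul (w ^ a * Real.exp (-s/(2*w)))
    convert (config := {preTransparency := .instances, postTransparency := .default}) this using 1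
    ring


noncomputable def Fq (s w : ℝ) : ℝ := Real.exp (-s/(2*w))
noncomputable def Gq (t w : ℝ) : ℝ := Real.exp (-w^2/(2*t))

/-- boundary function for integration by parts -/
noncomputable def Hq (s t a w : ℝ) : ℝ :=
  Gq t w * ((a * w^(a-1) + s/2 * w^(a-2)) * Fq s w) + w/t * Gq t w * (w^a * Fq s w)

noncomputable def Hq' (s t a w : ℝ) : ℝ :=
  Gq t w * ((a*(a-1)*w^(a-2) + (a-1)*s*w^(a-3) + s^2/4*w^(a-4)) * Fq s w)
    - (w^2/t^2 - 1/t) * Gq t w * (w^a * Fq s w)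

lemma hasDerivAt_Fq {s w : ℝ} (hw : 0 < w) :
    HasDerivAt (Fq s) (s/(2*w^2) * Fq s w) w := by
  have h0 := (hasDerivAt_inv hw.ne').const_mul (-s/2)
  have e1 : (fun y : ℝ => -s/2 * y⁻¹) = fun y : ℝ => -s/(2*y) := by
    funext v; rw [← div_eq_mul_inv, div_div]
  rw [e1] at h0
  have := h0.exp
  convert (config := {preTransparency := .instances, postTransparency := .default}) this using 1
  unfold Fq
  field_simp

lemma hasDerivAt_Gq {t w : ℝ} (ht : 0 < t) :
    HasDerivAt (Gq t) (-(w/t) * Gq t w) w := by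
  have h0 := (hasDerivAt_pow 2 w).const_mul (-(1/(2*t)))
  have e1 : (fun y : ℝ => -(1/(2*t)) * y^2) = fun y : ℝ => -y^2/(2*t) := by
    funext v; ring
  rw [e1] at h0
  have := h0.exp
  convert (config := {preTransparency := .instances, postTransparency := .default}) this using 1
  unfold Gq
  field_simp
  ring

lemma hasDerivAt_Hq {s t a : ℝ} (ht : 0 < t) {w : ℝ} (hw : 0 < w) :
    HasDerivAt (Hq s t a) (Hq' s t a w) w := by
  have hw0 : w ≠ 0 := hw.ne'
  have hRb : ∀ b : ℝ, HasDerivAt (fun w : ℝ => w ^ b) (b * w^(b-1)) w :=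
    fun b => Real.hasDerivAt_rpow_const (Or.inl hw0)
  have hF := hasDerivAt_Fq (s := s) hw
  have hG := hasDerivAt_Gq (t := t) (w := w) ht
  have hE : HasDerivAt (fun w : ℝ => w^a * Fq s w)
      (a * w^(a-1) * Fq s w + w^a * (s/(2*w^2) * Fq s w)) w := (hRb a).mul hF
  have hEp : HasDerivAt (fun w : ℝ => (a * w^(a-1) + s/2 * w^(a-2)) * Fq s w)
      ((a * ((a-1) * w^(a-1-1)) + s/2 * ((a-2) * w^(a-2-1))) * Fq s w
        + (a * w^(a-1) + s/2 * w^(a-2)) * (s/(2*w^2) * Fq s w)) w :=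
    (((hRb (a-1)).const_mul a).add ((hRb (a-2)).const_mul (s/2))).mul hF
  have hu : HasDerivAt (fun w : ℝ => w/t * Gq t w)
      (1/t * Gq t w + w/t * (-(w/t) * Gq t w)) w := by
    have := ((hasDerivAt_id w).div_const t).mul hG
    convert (config := {preTransparency := .instances, postTransparency := .default}) this using 1
  have hH := (hG.mul hEp).add (hu.mul hE)
  convert (config := {preTransparency := .instances, postTransparency := .default}) hH using 1
  unfold Hq' Fq Gq
  rw [show a-1-1 = a-2 from by ring, show a-2-1 = a-3 from by ring]
  rw [rp_m1 hw, rp_m2 hw, rp_m3 hw, rp_m4 hw]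
  have ht0 : t ≠ 0 := ht.ne'
  field_simp
  ring


lemma Hq_rw {s t a w : ℝ} (hw : 0 < w) :
    Hq s t a w = (|a| * w^(a-1) + s/2 * w^(a-2) + 1/t * w^(a+1)) * (Fq s w * Gq t w)
      - ((|a| - a) * w^(a-1)) * (Fq s w * Gq t w) := by
  unfold Hq
  rw [Real.rpow_add_one hw.ne']
  ring

lemma Hq_abs_le {s t a w : ℝ} (hs : 0 < s) (ht : 0 < t) (hw : 0 < w) :
    ‖Hq s t a w‖ ≤ (|a| * w^(a-1) + s/2 * w^(a-2) + 1/t * w^(a+1)) * (Fq s w * Gq t w) := by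
  have e : Hq s t a w = (a * w^(a-1) + s/2 * w^(a-2) + 1/t * w^(a+1)) * (Fq s w * Gq t w) := by
    unfold Hq
    rw [Real.rpow_add_one hw.ne']
    ring
  rw [e, Real.norm_eq_abs, abs_mul]
  have hFG : 0 < Fq s w * Gq t w := by unfold Fq Gq; positivity
  rw [abs_of_pos hFG]
  apply mul_le_mul_of_nonneg_right ?_ hFG.le
  calc |a * w^(a-1) + s/2 * w^(a-2) + 1/t * w^(a+1)|
      ≤ |a * w^(a-1) + s/2 * w^(a-2)| + |1/t * w^(a+1)| := abs_add_le _ _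
    _ ≤ |a * w^(a-1)| + |s/2 * w^(a-2)| + |1/t * w^(a+1)| := by
        have := abs_add_le (a * w^(a-1)) (s/2 * w^(a-2))
        linarith
    _ = |a| * w^(a-1) + s/2 * w^(a-2) + 1/t * w^(a+1) := by
        rw [abs_mul, abs_mul, abs_mul]
        rw [abs_of_pos (Real.rpow_pos_of_pos hw _), abs_of_pos (Real.rpow_pos_of_pos hw _),
          abs_of_pos (Real.rpow_pos_of_pos hw _), abs_of_pos (by positivity : (0:ℝ) < s/2),
          abs_of_pos (by positivity : (0:ℝ) < 1/t)]

lemma tendsto_Hq_atTop {s t a : ℝ} (hs : 0 < s) (ht : 0 < t) :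
    Tendsto (Hq s t a) atTop (nhds 0) := by
  have hb : (0:ℝ) < 1/(2*t) := by positivity
  have t1 := (tendsto_rpow_mul_exp_neg_mul_atTop_nhds_zero (a-1) _ hb).const_mul (|a|)
  have t2 := (tendsto_rpow_mul_exp_neg_mul_atTop_nhds_zero (a-2) _ hb).const_mul (s/2)
  have t3 := (tendsto_rpow_mul_exp_neg_mul_atTop_nhds_zero (a+1) _ hb).const_mul (1/t)
  have tsum := (t1.add t2).add t3
  rw [show |a| * 0 + s/2 * 0 + 1/t * 0 = 0 by ring] at tsum
  have tg : Tendsto (fun w : ℝ => (|a| * w^(a-1) + s/2 * w^(a-2) + 1/t * w^(a+1))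
      * Real.exp (-(1/(2*t)) * w)) atTop (nhds 0) := tsum.congr fun w => by ring
  apply squeeze_zero_norm' ?_ tg
  filter_upwards [eventually_ge_atTop (1:ℝ)] with w hw1
  have hw : (0:ℝ) < w := lt_of_lt_of_le one_pos hw1
  refine (Hq_abs_le hs ht hw).trans ?_
  apply mul_le_mul_of_nonneg_left ?_ (by positivity)
  have hF1 : Fq s w ≤ 1 := by
    unfold Fq
    rw [Real.exp_le_one_iff]
    rw [neg_div]
    have : 0 ≤ s/(2*w) := by positivity
    linarith
  have hG1 : Gq t w ≤ Real.exp (-(1/(2*t)) * w) := by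
    unfold Gq
    apply Real.exp_le_exp.2
    have e1 : -w^2/(2*t) = -(w^2 * (1/(2*t))) := by ring
    have e2 : -(1/(2*t))*w = -(w * (1/(2*t))) := by ring
    rw [e1, e2, neg_le_neg_iff]
    apply mul_le_mul_of_nonneg_right (by nlinarith) hb.le
  calc Fq s w * Gq t w ≤ 1 * Real.exp (-(1/(2*t)) * w) := by
        apply mul_le_mul hF1 hG1 (by unfold Gq; positivity) (by norm_num)
    _ = Real.exp (-(1/(2*t)) * w) := one_mul _

lemma tendsto_Hq_zero {s t a : ℝ} (hs : 0 < s) (ht : 0 < t) :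
    Tendsto (Hq s t a) (nhdsWithin 0 (Set.Ioi 0)) (nhds 0) := by
  have t1 := (tendsto_rpow_exp_zero hs (a-1)).const_mul (|a|)
  have t2 := (tendsto_rpow_exp_zero hs (a-2)).const_mul (s/2)
  have t3 := (tendsto_rpow_exp_zero hs (a+1)).const_mul (1/t)
  have tsum := (t1.add t2).add t3
  rw [show |a| * 0 + s/2 * 0 + 1/t * 0 = 0 by ring] at tsum
  have tg : Tendsto (fun w : ℝ => (|a| * w^(a-1) + s/2 * w^(a-2) + 1/t * w^(a+1))
      * Real.exp (-s/(2*w))) (nhdsWithin 0 (Set.Ioi 0)) (nhds 0) := tsum.congr fun w => by ring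
  apply squeeze_zero_norm' ?_ tg
  filter_upwards [self_mem_nhdsWithin] with w hw
  have hw : (0:ℝ) < w := hw
  refine (Hq_abs_le hs ht hw).trans ?_
  have hG1 : Gq t w ≤ 1 := by
    unfold Gq
    rw [Real.exp_le_one_iff, neg_div]
    have : 0 ≤ w^2/(2*t) := by positivity
    linarith
  have hF0 : 0 < Fq s w := by unfold Fq; positivity
  calc (|a| * w^(a-1) + s/2 * w^(a-2) + 1/t * w^(a+1)) * (Fq s w * Gq t w)
      ≤ (|a| * w^(a-1) + s/2 * w^(a-2) + 1/t * w^(a+1)) * (Fq s w * 1) := by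
        apply mul_le_mul_of_nonneg_left ?_ (by positivity)
        exact mul_le_mul_of_nonneg_left hG1 hF0.le
    _ = (|a| * w^(a-1) + s/2 * w^(a-2) + 1/t * w^(a+1)) * Real.exp (-s/(2*w)) := by
        unfold Fq; ring


lemma bint_ibp {s t : ℝ} (hs : 0 < s) (ht : 0 < t) (a : ℝ) :
    1/t^2 * bint s t (a+2) - 1/t * bint s t a
      = a*(a-1) * bint s t (a-2) + (a-1)*s * bint s t (a-3) + s^2/4 * bint s t (a-4) := by
  set B : ℝ → ℝ → ℝ := fun c w => w ^ c * Real.exp (-s/(2*w)) * Real.exp (-w^2/(2*t)) with hB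
  set L : ℝ → ℝ := fun w => a*(a-1) * B (a-2) w + (a-1)*s * B (a-3) w + s^2/4 * B (a-4) w
    + 1/t * B a w - 1/t^2 * B (a+2) w with hL
  have hLint : IntegrableOn L (Set.Ioi 0) := by
    apply Integrable.sub
    apply Integrable.add
    apply Integrable.add
    apply Integrable.add
    · exact (integrable_basic hs ht (a-2)).const_mul _
    · exact (integrable_basic hs ht (a-3)).const_mul _
    · exact (integrable_basic hs ht (a-4)).const_mul _
    · exact (integrable_basic hs ht a).const_mul _
    · exact (integrable_basic hs ht (a+2)).const_mul _
  have hHL : Set.EqOn (Hq' s t a) L (Set.Ioi 0) := by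
    intro w hw
    have hw : (0:ℝ) < w := hw
    have ht0 : t ≠ 0 := ht.ne'
    simp only [hL, hB, Hq', Fq, Gq]
    rw [rp_m2 hw, rp_m3 hw, rp_m4 hw, rp_p2 hw]
    field_simp
    ring
  have hint : IntegrableOn (Hq' s t a) (Set.Ioi 0) :=
    hLint.congr_fun (fun w hw => (hHL hw).symm) measurableSet_Ioi
  -- FTC on (1/(n+1), ∞)
  have key : ∀ n : ℕ, (∫ w in Set.Ioi ((1:ℝ)/(n+1)), Hq' s t a w)
      = 0 - Hq s t a (1/(n+1)) := by
    intro n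
    have hpos : (0:ℝ) < 1/(n+1) := by positivity
    apply integral_Ioi_of_hasDerivAt_of_tendsto'
    · intro w hwmem
      exact hasDerivAt_Hq ht (lt_of_lt_of_le hpos hwmem)
    · exact hint.mono_set (Set.Ioi_subset_Ioi hpos.le)
    · exact tendsto_Hq_atTop hs ht
  have hUnion : (⋃ n : ℕ, Set.Ioi ((1:ℝ)/(n+1))) = Set.Ioi 0 := by
    ext w
    simp only [Set.mem_iUnion, Set.mem_Ioi]
    constructor
    · rintro ⟨n, hn⟩
      exact lt_trans (by positivity) hn
    · intro hw
      obtain ⟨n, hn⟩ := exists_nat_one_div_lt hw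
      exact ⟨n, hn⟩
  have hmono : Monotone (fun n : ℕ => Set.Ioi ((1:ℝ)/(n+1))) := by
    intro n m hnm
    apply Set.Ioi_subset_Ioi
    have h1 : (0:ℝ) < (n:ℝ) + 1 := by positivity
    have h2 : (n:ℝ) + 1 ≤ (m:ℝ) + 1 := by exact_mod_cast Nat.add_le_add_right hnm 1
    exact one_div_le_one_div_of_le h1 h2
  have t1 : Tendsto (fun n : ℕ => ∫ w in Set.Ioi ((1:ℝ)/(n+1)), Hq' s t a w) atTop
      (nhds (∫ w in Set.Ioi (0:ℝ), Hq' s t a w)) := by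
    have := tendsto_setIntegral_of_monotone (s := fun n : ℕ => Set.Ioi ((1:ℝ)/(n+1)))
      (f := Hq' s t a) (fun n => measurableSet_Ioi) hmono (by rw [hUnion]; exact hint)
    rwa [hUnion] at this
  have t2 : Tendsto (fun n : ℕ => (0:ℝ) - Hq s t a (1/(n+1))) atTop (nhds 0) := by
    have ha : Tendsto (fun n : ℕ => (1:ℝ)/(n+1)) atTop (nhdsWithin 0 (Set.Ioi 0)) := by
      rw [tendsto_nhdsWithin_iff]
      exact ⟨tendsto_one_div_add_atTop_nhds_zero_nat,
        Filter.Eventually.of_forall fun n => Set.mem_Ioi.2 (by positivity)⟩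
    have := ((tendsto_Hq_zero (a := a) hs ht).comp ha).const_sub 0
    simpa using this
  have izero : (∫ w in Set.Ioi (0:ℝ), Hq' s t a w) = 0 := by
    have t1' : Tendsto (fun n : ℕ => (0:ℝ) - Hq s t a (1/(n+1))) atTop
        (nhds (∫ w in Set.Ioi (0:ℝ), Hq' s t a w)) := t1.congr key
    exact tendsto_nhds_unique t1' t2
  have iL : (∫ w in Set.Ioi (0:ℝ), L w) = 0 := by
    rw [← setIntegral_congr_fun measurableSet_Ioi hHL]
    exact izero
  have expand : (∫ w in Set.Ioi (0:ℝ), L w)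
      = a*(a-1) * bint s t (a-2) + (a-1)*s * bint s t (a-3) + s^2/4 * bint s t (a-4)
        + 1/t * bint s t a - 1/t^2 * bint s t (a+2) := by
    have i1 : IntegrableOn (fun w => a*(a-1) * B (a-2) w) (Set.Ioi (0:ℝ)) :=
      (integrable_basic hs ht (a-2)).const_mul _
    have i2 : IntegrableOn (fun w => (a-1)*s * B (a-3) w) (Set.Ioi (0:ℝ)) :=
      (integrable_basic hs ht (a-3)).const_mul _
    have i3 : IntegrableOn (fun w => s^2/4 * B (a-4) w) (Set.Ioi (0:ℝ)) :=
      (integrable_basic hs ht (a-4)).const_mul _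
    have i4 : IntegrableOn (fun w => 1/t * B a w) (Set.Ioi (0:ℝ)) :=
      (integrable_basic hs ht a).const_mul _
    have i5 : IntegrableOn (fun w => 1/t^2 * B (a+2) w) (Set.Ioi (0:ℝ)) :=
      (integrable_basic hs ht (a+2)).const_mul _
    have I12 : IntegrableOn (fun w => a*(a-1) * B (a-2) w + (a-1)*s * B (a-3) w)
        (Set.Ioi (0:ℝ)) := i1.add i2
    have I13 : IntegrableOn (fun w => a*(a-1) * B (a-2) w + (a-1)*s * B (a-3) w
        + s^2/4 * B (a-4) w) (Set.Ioi (0:ℝ)) := I12.add i3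
    have I14 : IntegrableOn (fun w => a*(a-1) * B (a-2) w + (a-1)*s * B (a-3) w
        + s^2/4 * B (a-4) w + 1/t * B a w) (Set.Ioi (0:ℝ)) := I13.add i4
    simp only [hL]
    rw [MeasureTheory.integral_sub I14 i5,
      MeasureTheory.integral_add I13 i4,
      MeasureTheory.integral_add I12 i3,
      MeasureTheory.integral_add i1 i2]
    unfold bint
    rw [MeasureTheory.integral_const_mul, MeasureTheory.integral_const_mul,
      MeasureTheory.integral_const_mul, MeasureTheory.integral_const_mul,
      MeasureTheory.integral_const_mul]
  rw [expand] at iL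
  linarith


noncomputable def Cd (d : ℕ) : ℝ := 2 * (2*π)^(-(1:ℝ)/2) * (2*π)^(-(d:ℝ)/2)

lemma prod_gauss (d : ℕ) (x : Fin d → ℝ) {w : ℝ} (hw : 0 < w) :
    (∏ k : Fin d, Real.exp (-(x k)^2 / (2*w)) / Real.sqrt (2*π*w))
      = (2*π)^(-(d:ℝ)/2) * (w ^ (-(d:ℝ)/2) * Real.exp (-(∑ k, (x k)^2)/(2*w))) := by
  have h2πw : (0:ℝ) ≤ 2*π*w := by positivity
  rw [Finset.prod_div_distrib, ← Real.exp_sum, Finset.prod_const]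
  have hc : (Finset.univ : Finset (Fin d)).card = d := by simp
  rw [hc]
  have hsum : (∑ k : Fin d, -(x k)^2/(2*w)) = -(∑ k : Fin d, (x k)^2)/(2*w) := by
    rw [← Finset.sum_div]
    congr 1
    rw [← Finset.sum_neg_distrib]
  rw [hsum]
  have hpow : Real.sqrt (2*π*w) ^ d = (2*π)^((d:ℝ)/2) * w ^ ((d:ℝ)/2) := by
    rw [Real.sqrt_eq_rpow, ← Real.rpow_natCast ((2*π*w) ^ (1/2:ℝ)) d, ← Real.rpow_mul h2πw,
      show (1/2:ℝ) * (d:ℝ) = (d:ℝ)/2 by ring,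
      Real.mul_rpow (by positivity) hw.le]
  rw [hpow, show (-(d:ℝ)/2) = -((d:ℝ)/2) by ring, Real.rpow_neg (by positivity : (0:ℝ) ≤ 2*π),
    Real.rpow_neg hw.le]
  have h1 : (2*π:ℝ)^((d:ℝ)/2) ≠ 0 := by positivity
  have h2 : w^((d:ℝ)/2) ≠ 0 := by positivity
  field_simp

lemma density_eq (d : ℕ) (x : Fin d → ℝ) {t : ℝ} (ht : 0 < t) :
    iterBMDensityVec d x t
      = Cd d * t ^ (-(1:ℝ)/2) * bint (∑ k, (x k)^2) t (-(d:ℝ)/2) := by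
  unfold iterBMDensityVec
  have key : (∫ w in Set.Ioi (0:ℝ),
        (Real.exp (-w^2/(2*t)) / Real.sqrt (2*π*t)) *
          ∏ k : Fin d, Real.exp (-(x k)^2 / (2*w)) / Real.sqrt (2*π*w))
      = ((2*π)^(-(1:ℝ)/2) * (2*π)^(-(d:ℝ)/2) * t^(-(1:ℝ)/2)) * bint (∑ k, (x k)^2) t (-(d:ℝ)/2) := by
    unfold bint
    rw [← MeasureTheory.integral_const_mul]
    apply setIntegral_congr_fun measurableSet_Ioi
    intro w hw
    have hw : (0:ℝ) < w := hw
    dsimp only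
    rw [prod_gauss d x hw]
    rw [Real.sqrt_eq_rpow, Real.mul_rpow (by positivity : (0:ℝ) ≤ 2*π) ht.le]
    rw [show (-(1:ℝ)/2) = -(1/2:ℝ) by norm_num]
    rw [Real.rpow_neg (by positivity : (0:ℝ) ≤ 2*π), Real.rpow_neg ht.le]
    have h1 : (2*π:ℝ)^(1/2:ℝ) ≠ 0 := by positivity
    have h2 : t^(1/2:ℝ) ≠ 0 := by positivity
    field_simp
  rw [key, Cd]
  ring


noncomputable def ell0 (d : ℕ) (t u : ℝ) : ℝ := Cd d * t ^ (-(1:ℝ)/2) * bint u t (-(d:ℝ)/2)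
noncomputable def ell1 (d : ℕ) (t u : ℝ) : ℝ :=
  Cd d * t ^ (-(1:ℝ)/2) * (-(1/2) * bint u t (-(d:ℝ)/2 - 1))
noncomputable def ell2 (d : ℕ) (t u : ℝ) : ℝ :=
  Cd d * t ^ (-(1:ℝ)/2) * (1/4 * bint u t (-(d:ℝ)/2 - 2))
noncomputable def ell3 (d : ℕ) (t u : ℝ) : ℝ :=
  Cd d * t ^ (-(1:ℝ)/2) * (-(1/8) * bint u t (-(d:ℝ)/2 - 3))
noncomputable def ell4 (d : ℕ) (t u : ℝ) : ℝ :=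
  Cd d * t ^ (-(1:ℝ)/2) * (1/16 * bint u t (-(d:ℝ)/2 - 4))
noncomputable def Psi (d : ℕ) (t u : ℝ) : ℝ := 2*(d:ℝ)*ell1 d t u + 4*u*ell2 d t u
noncomputable def Psi' (d : ℕ) (t u : ℝ) : ℝ := (2*(d:ℝ)+4)*ell2 d t u + 4*u*ell3 d t u
noncomputable def Psi'' (d : ℕ) (t u : ℝ) : ℝ := (2*(d:ℝ)+8)*ell3 d t u + 4*u*ell4 d t u

lemma hasDerivAt_ell0 (d : ℕ) {t u : ℝ} (ht : 0 < t) (hu : 0 < u) :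
    HasDerivAt (ell0 d t) (ell1 d t u) u := by
  have h := (hasDerivAt_bint_s hu ht (-(d:ℝ)/2)).const_mul (Cd d * t ^ (-(1:ℝ)/2))
  convert (config := {preTransparency := .instances, postTransparency := .default}) h using 1

lemma hasDerivAt_ell1 (d : ℕ) {t u : ℝ} (ht : 0 < t) (hu : 0 < u) :
    HasDerivAt (ell1 d t) (ell2 d t u) u := by
  have h := (hasDerivAt_bint_s hu ht (-(d:ℝ)/2 - 1)).const_mul
    (Cd d * t ^ (-(1:ℝ)/2) * -(1/2))
  convert (config := {preTransparency := .instances, postTransparency := .default}) h using 1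
  · funext v; unfold ell1; ring
  · unfold ell2; rw [show (-(d:ℝ)/2 - 1 - 1) = -(d:ℝ)/2 - 2 by ring]; ring

lemma hasDerivAt_ell2 (d : ℕ) {t u : ℝ} (ht : 0 < t) (hu : 0 < u) :
    HasDerivAt (ell2 d t) (ell3 d t u) u := by
  have h := (hasDerivAt_bint_s hu ht (-(d:ℝ)/2 - 2)).const_mul
    (Cd d * t ^ (-(1:ℝ)/2) * (1/4))
  convert (config := {preTransparency := .instances, postTransparency := .default}) h using 1
  · funext v; unfold ell2; ring
  · unfold ell3; rw [show (-(d:ℝ)/2 - 2 - 1) = -(d:ℝ)/2 - 3 by ring]; ring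

lemma hasDerivAt_ell3 (d : ℕ) {t u : ℝ} (ht : 0 < t) (hu : 0 < u) :
    HasDerivAt (ell3 d t) (ell4 d t u) u := by
  have h := (hasDerivAt_bint_s hu ht (-(d:ℝ)/2 - 3)).const_mul
    (Cd d * t ^ (-(1:ℝ)/2) * -(1/8))
  convert (config := {preTransparency := .instances, postTransparency := .default}) h using 1
  · funext v; unfold ell3; ring
  · unfold ell4; rw [show (-(d:ℝ)/2 - 3 - 1) = -(d:ℝ)/2 - 4 by ring]; ring

lemma hasDerivAt_Psi (d : ℕ) {t u : ℝ} (ht : 0 < t) (hu : 0 < u) :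
    HasDerivAt (Psi d t) (Psi' d t u) u := by
  have h1 := (hasDerivAt_ell1 d ht hu).const_mul (2*(d:ℝ))
  have h2 := (((hasDerivAt_id u).const_mul (4:ℝ)).mul (hasDerivAt_ell2 d ht hu))
  have h := h1.add h2
  convert (config := {preTransparency := .instances, postTransparency := .default}) h using 1
  simp only [id_eq]
  unfold Psi'
  ring

lemma hasDerivAt_Psi' (d : ℕ) {t u : ℝ} (ht : 0 < t) (hu : 0 < u) :
    HasDerivAt (Psi' d t) (Psi'' d t u) u := by
  have h1 := (hasDerivAt_ell2 d ht hu).const_mul (2*(d:ℝ)+4)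
  have h2 := (((hasDerivAt_id u).const_mul (4:ℝ)).mul (hasDerivAt_ell3 d ht hu))
  have h := h1.add h2
  convert (config := {preTransparency := .instances, postTransparency := .default}) h using 1
  simp only [id_eq]
  unfold Psi''
  ring

lemma iteratedDeriv_two_comp_sq {f Φ Φ' Φ'' : ℝ → ℝ} {r b : ℝ} (hb : 0 < r + b^2)
    (hf : ∀ᶠ h in nhds b, f h = Φ (r + h^2))
    (hΦ : ∀ u, 0 < u → HasDerivAt Φ (Φ' u) u)
    (hΦ' : ∀ u, 0 < u → HasDerivAt Φ' (Φ'' u) u) :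
    iteratedDeriv 2 f b = 2 * Φ' (r + b^2) + 4*b^2 * Φ'' (r + b^2) := by
  have hU : ∀ᶠ h in nhds b, 0 < r + h^2 := by
    have hc : Continuous (fun h : ℝ => r + h^2) := by fun_prop
    have : IsOpen {h : ℝ | 0 < r + h^2} := isOpen_lt continuous_const hc
    exact this.mem_nhds hb
  have hgd : ∀ h : ℝ, HasDerivAt (fun z : ℝ => r + z^2) (2*h) h := by
    intro h
    have := (hasDerivAt_pow 2 h).const_add r
    simpa using this
  have hd : deriv f =ᶠ[nhds b] (fun h => Φ' (r + h^2) * (2*h)) := by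
    have hff : ∀ᶠ h in nhds b, ∀ᶠ z in nhds h, f z = Φ (r + z^2) :=
      eventually_eventually_nhds.2 hf
    filter_upwards [hU, hff] with h hh hfz
    have heq : f =ᶠ[nhds h] (fun z => Φ (r + z^2)) := hfz
    rw [heq.deriv_eq]
    exact (((hΦ (r + h^2) hh).comp h (hgd h))).deriv
  rw [iteratedDeriv_succ, iteratedDeriv_one]
  rw [hd.deriv_eq]
  have hD : HasDerivAt (fun h : ℝ => Φ' (r + h^2) * (2*h))
      ((Φ'' (r + b^2) * (2*b)) * (2*b) + Φ' (r + b^2) * 2) b := by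
    have h1 : HasDerivAt (fun h : ℝ => Φ' (r + h^2)) (Φ'' (r + b^2) * (2*b)) b :=
      (hΦ' (r + b^2) hb).comp b (hgd b)
    have h2 : HasDerivAt (fun h : ℝ => 2*h) (2:ℝ) b := by
      simpa using (hasDerivAt_id b).const_mul (2:ℝ)
    exact h1.mul h2
  rw [hD.deriv]
  ring

lemma sum_update_sq {d : ℕ} (y : Fin d → ℝ) (j : Fin d) (h : ℝ) :
    (∑ k, (Function.update y j h k)^2) = ((∑ k, (y k)^2) - (y j)^2) + h^2 := by
  have e : ∀ k, (Function.update y j h k)^2 = Function.update (fun k => (y k)^2) j (h^2) k := by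
    intro k
    by_cases hk : k = j
    · subst hk; simp
    · simp [Function.update_of_ne hk]
  simp_rw [e]
  rw [Finset.sum_update_of_mem (Finset.mem_univ j)]
  have e2 : (Finset.univ \ {j} : Finset (Fin d)) = Finset.univ.erase j := by
    rw [← Finset.erase_eq]
  rw [e2]
  have e3 : (∑ k ∈ Finset.univ.erase j, (y k)^2) + (y j)^2 = ∑ k, (y k)^2 :=
    Finset.sum_erase_add _ _ (Finset.mem_univ j)
  linarith

lemma laplacian_density (d : ℕ) {t : ℝ} (ht : 0 < t) (y : Fin d → ℝ)
    (hy : 0 < ∑ k, (y k)^2) :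
    laplacian (fun z => iterBMDensityVec d z t) y = Psi d t (∑ k, (y k)^2) := by
  unfold laplacian
  have hterm : ∀ j : Fin d,
      iteratedDeriv 2 (fun h => iterBMDensityVec d (Function.update y j h) t) (y j)
        = 2 * ell1 d t (∑ k, (y k)^2) + 4*(y j)^2 * ell2 d t (∑ k, (y k)^2) := by
    intro j
    have hb : 0 < ((∑ k, (y k)^2) - (y j)^2) + (y j)^2 := by
      rw [sub_add_cancel]; exact hy
    have hrw := iteratedDeriv_two_comp_sq (f := fun h => iterBMDensityVec d (Function.update y j h) t)
      (Φ := ell0 d t) (Φ' := ell1 d t) (Φ'' := ell2 d t)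
      (r := (∑ k, (y k)^2) - (y j)^2) (b := y j) hb
      (Filter.Eventually.of_forall fun h => by
        rw [density_eq d _ ht, sum_update_sq]
        rfl)
      (fun u hu => hasDerivAt_ell0 d ht hu)
      (fun u hu => hasDerivAt_ell1 d ht hu)
    rw [hrw, sub_add_cancel]
  rw [Finset.sum_congr rfl (fun j _ => hterm j)]
  rw [Finset.sum_add_distrib, Finset.sum_const, Finset.card_univ, Fintype.card_fin]
  have e : (∑ j : Fin d, 4*(y j)^2 * ell2 d t (∑ k, (y k)^2))
      = 4 * (∑ k, (y k)^2) * ell2 d t (∑ k, (y k)^2) := by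
    rw [show 4 * (∑ k, (y k)^2) * ell2 d t (∑ k, (y k)^2)
        = (∑ k, (y k)^2) * (4 * ell2 d t (∑ k, (y k)^2)) by ring, Finset.sum_mul]
    apply Finset.sum_congr rfl
    intro j _
    ring
  rw [e]
  unfold Psi
  rw [nsmul_eq_mul]
  ring

end IterBMAux


open IterBMAux in
/-- Away from the origin, the joint density of `(B₁(|B(t)|), ..., B_d(|B(t)|))` satisfies
`∂p/∂t = (1/8)(∑_j ∂²/∂x_j²)² p`. -/
theorem iterBMDensityVec_pde (d : ℕ) (hd : 1 ≤ d) :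
    ∀ (x : Fin d → ℝ) (t : ℝ), x ≠ 0 → 0 < t →
      deriv (fun τ => iterBMDensityVec d x τ) t
        = (1 / 8) * laplacian (fun y => laplacian (fun z => iterBMDensityVec d z t) y) x := by
  intro x t hx ht
  have hS0 : 0 < ∑ k, (x k)^2 := by
    obtain ⟨j, hj⟩ := Function.ne_iff.1 hx
    have hj' : x j ≠ 0 := by simpa using hj
    have h1 : 0 < (x j)^2 := by positivity
    calc (0:ℝ) < (x j)^2 := h1
      _ ≤ ∑ k, (x k)^2 := Finset.single_le_sum (fun k _ => sq_nonneg (x k)) (Finset.mem_univ j)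
  -- time derivative
  have hev : (fun τ => iterBMDensityVec d x τ) =ᶠ[nhds t]
      (fun τ => Cd d * (τ ^ (-(1:ℝ)/2) * bint (∑ k, (x k)^2) τ (-(d:ℝ)/2))) := by
    filter_upwards [eventually_gt_nhds ht] with τ hτ
    rw [density_eq d x hτ]
    ring
  have hder : HasDerivAt (fun τ => Cd d * (τ ^ (-(1:ℝ)/2) * bint (∑ k, (x k)^2) τ (-(d:ℝ)/2)))
      (Cd d * ((-(1:ℝ)/2 * t ^ (-(1:ℝ)/2 - 1)) * bint (∑ k, (x k)^2) t (-(d:ℝ)/2)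
        + t ^ (-(1:ℝ)/2) * (1/(2*t^2) * bint (∑ k, (x k)^2) t (-(d:ℝ)/2 + 2)))) t := by
    have h1 : HasDerivAt (fun τ : ℝ => τ ^ (-(1:ℝ)/2)) (-(1:ℝ)/2 * t ^ (-(1:ℝ)/2 - 1)) t :=
      Real.hasDerivAt_rpow_const (Or.inl ht.ne')
    exact (h1.mul (hasDerivAt_bint_t hS0 ht (-(d:ℝ)/2))).const_mul (Cd d)
  -- outer laplacian
  have houter : laplacian (fun y => laplacian (fun z => iterBMDensityVec d z t) y) x
      = 2*(d:ℝ) * Psi' d t (∑ k, (x k)^2) + 4*(∑ k, (x k)^2) * Psi'' d t (∑ k, (x k)^2) := by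
    rw [show laplacian (fun y => laplacian (fun z => iterBMDensityVec d z t) y) x
        = ∑ j : Fin d, iteratedDeriv 2
            (fun h => laplacian (fun z => iterBMDensityVec d z t) (Function.update x j h)) (x j)
          from rfl]
    have hterm : ∀ j : Fin d, iteratedDeriv 2
        (fun h => laplacian (fun z => iterBMDensityVec d z t) (Function.update x j h)) (x j)
          = 2 * Psi' d t (∑ k, (x k)^2) + 4*(x j)^2 * Psi'' d t (∑ k, (x k)^2) := by
      intro j
      have hb : 0 < ((∑ k, (x k)^2) - (x j)^2) + (x j)^2 := by
        rw [sub_add_cancel]; exact hS0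
      have hU : ∀ᶠ h in nhds (x j), 0 < ((∑ k, (x k)^2) - (x j)^2) + h^2 := by
        have hc : Continuous (fun h : ℝ => ((∑ k, (x k)^2) - (x j)^2) + h^2) := by fun_prop
        exact (isOpen_lt continuous_const hc).mem_nhds hb
      have hf : ∀ᶠ h in nhds (x j),
          (fun h => laplacian (fun z => iterBMDensityVec d z t) (Function.update x j h)) h
            = Psi d t (((∑ k, (x k)^2) - (x j)^2) + h^2) := by
        filter_upwards [hU] with h hh
        have hsum : 0 < ∑ k, (Function.update x j h k)^2 := by
          rw [sum_update_sq]; exact hh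
        rw [laplacian_density d ht _ hsum, sum_update_sq]
      have hrw := iteratedDeriv_two_comp_sq
        (f := fun h => laplacian (fun z => iterBMDensityVec d z t) (Function.update x j h))
        (Φ := Psi d t) (Φ' := Psi' d t) (Φ'' := Psi'' d t)
        (r := (∑ k, (x k)^2) - (x j)^2) (b := x j) hb hf
        (fun u hu => hasDerivAt_Psi d ht hu) (fun u hu => hasDerivAt_Psi' d ht hu)
      rw [hrw, sub_add_cancel]
    rw [Finset.sum_congr rfl fun j _ => hterm j, Finset.sum_add_distrib, Finset.sum_const,
      Finset.card_univ, Fintype.card_fin, nsmul_eq_mul]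
    have e : (∑ j : Fin d, 4*(x j)^2 * Psi'' d t (∑ k, (x k)^2))
        = 4 * (∑ k, (x k)^2) * Psi'' d t (∑ k, (x k)^2) := by
      rw [show 4 * (∑ k, (x k)^2) * Psi'' d t (∑ k, (x k)^2)
          = (∑ k, (x k)^2) * (4 * Psi'' d t (∑ k, (x k)^2)) by ring, Finset.sum_mul]
      apply Finset.sum_congr rfl
      intro j _
      ring
    rw [e]
    ring
  rw [hev.deriv_eq, hder.deriv, houter]
  have hibp := bint_ibp hS0 ht (-(d:ℝ)/2)
  rw [rp_m1 ht (-(1:ℝ)/2)]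
  unfold Psi' Psi'' ell2 ell3 ell4
  linear_combination (Cd d * t ^ (-(1:ℝ)/2) * (1/2)) * hibp
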